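/- If C ∈ B²(γ,β), then C ∈ B¹(γ²,β) and (1/β)C ∈ B³(β/γ), i.e., E‖(1/β)C(x) − x‖² ≤ (1 − γ/β)‖x‖² for all x. -/

import Mathlib

open MeasureTheory

lemma sq_integral_le_aux {Ω : Type*} [MeasurableSpace Ω] (μ : Measure Ω)
    [IsProbabilityMeasure μ] (f : Ω → ℝ) (h1 : Integrable f μ)
    (h2 : Integrable (fun ω => f ω ^ 2) μ) :
    (∫ ω, f ω ∂μ) ^ 2 ≤ ∫ ω, f ω ^ 2 ∂μ := by
  set m := ∫ ω, f ω ∂μ with hm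
  have ia : Integrable (fun ω => f ω ^ 2 - (2 * m) * f ω) μ :=
    h2.sub (h1.const_mul _)
  have h0 : 0 ≤ ∫ ω, (f ω - m) ^ 2 ∂μ := integral_nonneg fun ω => sq_nonneg _
  have he : ∫ ω, (f ω - m) ^ 2 ∂μ
      = ∫ ω, ((f ω ^ 2 - (2 * m) * f ω) + m ^ 2) ∂μ := by
    congr 1; funext ω; ring
  rw [he, integral_add ia (integrable_const _),
      integral_sub h2 (h1.const_mul _), integral_const_mul, integral_const,
      probReal_univ] at h0
  simp only [ENNReal.toReal_one, one_smul, ← hm] at h0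
  nlinarith [h0]

/-- If `C ∈ B²(γ,β)`, then `C ∈ B¹(γ²,β)` and `(1/β)C ∈ B³(β/γ)`, i.e.
`E‖(1/β)C(x) − x‖² ≤ (1 − γ/β)‖x‖²` for all `x`. -/
theorem stmt4 {d : ℕ} {Ω : Type*} [MeasurableSpace Ω]
    (μ : Measure Ω) [IsProbabilityMeasure μ]
    (C : EuclideanSpace ℝ (Fin d) → Ω → EuclideanSpace ℝ (Fin d))
    (γ β : ℝ) (hγ : 0 < γ) (hβ : 0 < β)
    (hintC : ∀ x, Integrable (C x) μ)
    (hintC2 : ∀ x, Integrable (fun ω => ‖C x ω‖ ^ 2) μ)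
    (hB : ∀ x, γ * ‖x‖ ^ 2 ≤ (inner ℝ (∫ ω, C x ω ∂μ) x : ℝ) ∧
      ∫ ω, ‖C x ω‖ ^ 2 ∂μ ≤ β * (inner ℝ (∫ ω, C x ω ∂μ) x : ℝ)) :
    (∀ x, γ ^ 2 * ‖x‖ ^ 2 ≤ ∫ ω, ‖C x ω‖ ^ 2 ∂μ ∧
      ∫ ω, ‖C x ω‖ ^ 2 ∂μ ≤ β * (inner ℝ (∫ ω, C x ω ∂μ) x : ℝ)) ∧
    (∀ x, ∫ ω, ‖(1 / β) • C x ω - x‖ ^ 2 ∂μ ≤ (1 - γ / β) * ‖x‖ ^ 2) := by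
  constructor
  · intro x
    refine ⟨?_, (hB x).2⟩
    rcases eq_or_ne x 0 with rfl | hx
    · simpa using integral_nonneg (μ := μ) (fun ω => sq_nonneg ‖C 0 ω‖)
    · have hx' : 0 < ‖x‖ := norm_pos_iff.mpr hx
      have h1 := (hB x).1
      have hcs : (inner ℝ (∫ ω, C x ω ∂μ) x : ℝ) ≤ ‖∫ ω, C x ω ∂μ‖ * ‖x‖ :=
        real_inner_le_norm _ _
      have hj1 : ‖∫ ω, C x ω ∂μ‖ ≤ ∫ ω, ‖C x ω‖ ∂μ :=
        norm_integral_le_integral_norm _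
      have hj2 : (∫ ω, ‖C x ω‖ ∂μ) ^ 2 ≤ ∫ ω, ‖C x ω‖ ^ 2 ∂μ :=
        sq_integral_le_aux μ _ (hintC x).norm (hintC2 x)
      set I := ∫ ω, ‖C x ω‖ ∂μ with hI'
      have hI : 0 ≤ I := integral_nonneg fun ω => norm_nonneg _
      have step : γ * ‖x‖ ^ 2 ≤ I * ‖x‖ := by
        calc γ * ‖x‖ ^ 2 ≤ ‖∫ ω, C x ω ∂μ‖ * ‖x‖ := le_trans h1 hcs
        _ ≤ I * ‖x‖ := by
            exact mul_le_mul_of_nonneg_right hj1 (norm_nonneg _)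
      have hγx : 0 ≤ γ * ‖x‖ ^ 2 := by positivity
      have sq1 : (γ * ‖x‖ ^ 2) ^ 2 ≤ (I * ‖x‖) ^ 2 := by
        exact pow_le_pow_left₀ hγx step 2
      have sq2 : I ^ 2 * ‖x‖ ^ 2 ≤ (∫ ω, ‖C x ω‖ ^ 2 ∂μ) * ‖x‖ ^ 2 :=
        mul_le_mul_of_nonneg_right hj2 (sq_nonneg _)
      nlinarith [mul_pos hx' hx', sq_nonneg ‖x‖]
  · intro x
    have hexp : ∀ ω, ‖(1 / β) • C x ω - x‖ ^ 2
        = (1 / β) ^ 2 * ‖C x ω‖ ^ 2 - 2 * (1 / β) * (inner ℝ x (C x ω) : ℝ)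
          + ‖x‖ ^ 2 := by
      intro ω
      rw [norm_sub_sq_real, norm_smul, real_inner_smul_left]
      rw [Real.norm_eq_abs, abs_of_pos (by positivity : (0:ℝ) < 1 / β)]
      rw [real_inner_comm]
      ring
    have hinner_int : Integrable (fun ω => (inner ℝ x (C x ω) : ℝ)) μ :=
      (hintC x).const_inner x
    have hintegral : ∫ ω, (inner ℝ x (C x ω) : ℝ) ∂μ
        = (inner ℝ x (∫ ω, C x ω ∂μ) : ℝ) := (integral_inner (hintC x) x)
    have ia : Integrable (fun ω => (1 / β) ^ 2 * ‖C x ω‖ ^ 2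
        - 2 * (1 / β) * (inner ℝ x (C x ω) : ℝ)) μ :=
      ((hintC2 x).const_mul _).sub (hinner_int.const_mul _)
    have hsum : ∫ ω, ‖(1 / β) • C x ω - x‖ ^ 2 ∂μ
        = (1 / β) ^ 2 * (∫ ω, ‖C x ω‖ ^ 2 ∂μ)
          - 2 * (1 / β) * (inner ℝ x (∫ ω, C x ω ∂μ) : ℝ) + ‖x‖ ^ 2 := by
      rw [show (fun ω => ‖(1 / β) • C x ω - x‖ ^ 2) = fun ω =>
          ((1 / β) ^ 2 * ‖C x ω‖ ^ 2 - 2 * (1 / β) * (inner ℝ x (C x ω) : ℝ))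
            + ‖x‖ ^ 2 from funext (fun ω => hexp ω),
        integral_add ia (integrable_const _),
        integral_sub ((hintC2 x).const_mul _) (hinner_int.const_mul _),
        integral_const_mul, integral_const_mul, integral_const, probReal_univ,
        hintegral]
      simp
    have h1 := (hB x).1
    have h2 := (hB x).2
    have hcomm : (inner ℝ x (∫ ω, C x ω ∂μ) : ℝ)
        = (inner ℝ (∫ ω, C x ω ∂μ) x : ℝ) := real_inner_comm _ _
    rw [hsum, hcomm]
    set ip := (inner ℝ (∫ ω, C x ω ∂μ) x : ℝ) with hip
    set J := ∫ ω, ‖C x ω‖ ^ 2 ∂μ with hJ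
    have key : (1 / β) ^ 2 * J ≤ (1 / β) * ip := by
      have h := mul_le_mul_of_nonneg_left h2
        (le_of_lt (by positivity : (0:ℝ) < (1 / β) ^ 2))
      have : (1 / β) ^ 2 * (β * ip) = (1 / β) * ip := by
        field_simp
      linarith
    have key2 : (γ / β) * ‖x‖ ^ 2 ≤ (1 / β) * ip := by
      have h := mul_le_mul_of_nonneg_left h1
        (le_of_lt (by positivity : (0:ℝ) < 1 / β))
      have : (1 / β) * (γ * ‖x‖ ^ 2) = (γ / β) * ‖x‖ ^ 2 := by ring
      linarith
    have : (1 - γ / β) * ‖x‖ ^ 2 = ‖x‖ ^ 2 - (γ / β) * ‖x‖ ^ 2 := by ring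
    linarith
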